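/- For all k ≥ 0 the alternating minimization iterates satisfy H^k − H* ≤ 2((1/L₁) + (1/L₂))^{-1} R² / ( k + 2R²((1/L₁) + (1/L₂))^{-1} (H⁰ − H*)^{-1} ); in particular, for all k ≥ 1, H^k − H* ≤ 2((1/L₁) + (1/L₂))^{-1} R² / k. -/

import Mathlib

open Set

private lemma grad_ineq {W : Type*} [NormedAddCommGroup W] [NormedSpace ℝ W]
    {f : W → ℝ} (hconv : ConvexOn ℝ Set.univ f) (hdiff : Differentiable ℝ f)
    (z w : W) : f z + fderiv ℝ f z (w - z) ≤ f w := by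
  set g : ℝ → ℝ := fun t => f (z + t • (w - z)) with hgdef
  have hline : HasDerivAt (fun t : ℝ => z + t • (w - z)) (w - z) 0 := by
    simpa using ((hasDerivAt_id (0:ℝ)).smul_const (w - z)).const_add z
  have hg : HasDerivAt g (fderiv ℝ f z (w - z)) 0 := by
    have h1 := (hdiff (z + (0:ℝ) • (w - z))).hasFDerivAt.comp_hasDerivAt 0 hline
    simp only [zero_smul, add_zero] at h1
    exact h1
  have hgc : ConvexOn ℝ Set.univ g := by
    have h2 := hconv.comp_affineMap (AffineMap.lineMap z w)
    have h3 : (f ∘ (AffineMap.lineMap z w)) = g := by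
      funext t
      simp [hgdef, AffineMap.lineMap_apply, vsub_eq_sub, vadd_eq_add, add_comm]
    rw [h3] at h2
    simpa using h2
  have h4 := hgc.le_slope_of_hasDerivAt (mem_univ (0:ℝ)) (mem_univ (1:ℝ)) zero_lt_one hg
  have h5 : slope g 0 1 = f w - f z := by
    simp [slope_def_field, hgdef]
  rw [h5] at h4
  linarith

private lemma quad_bound {W : Type*} [NormedAddCommGroup W] [NormedSpace ℝ W]
    {f : W → ℝ} (hdiff : Differentiable ℝ f) (z h : W) (C : ℝ)
    (hlip : ∀ t : ℝ, 0 ≤ t → t ≤ 1 →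
      fderiv ℝ f (z + t • h) h - fderiv ℝ f z h ≤ C * t) :
    f (z + h) ≤ f z + fderiv ℝ f z h + C / 2 := by
  set φ : ℝ → ℝ := fun t => f (z + t • h) - t * fderiv ℝ f z h - C * t ^ 2 / 2 with hφ
  have hφd : ∀ t : ℝ, HasDerivAt φ (fderiv ℝ f (z + t • h) h - fderiv ℝ f z h - C * t) t := by
    intro t
    have hline : HasDerivAt (fun t : ℝ => z + t • h) h t := by
      simpa using ((hasDerivAt_id t).smul_const h).const_add z
    have h1 : HasDerivAt (fun t : ℝ => f (z + t • h)) (fderiv ℝ f (z + t • h) h) t :=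
      (hdiff _).hasFDerivAt.comp_hasDerivAt t hline
    have h2 : HasDerivAt (fun t : ℝ => t * fderiv ℝ f z h) (fderiv ℝ f z h) t := by
      simpa using (hasDerivAt_id t).mul_const (fderiv ℝ f z h)
    have h3 : HasDerivAt (fun t : ℝ => C * t ^ 2 / 2) (C * t) t := by
      have h4 := ((hasDerivAt_pow 2 t).const_mul C).div_const 2
      exact h4.congr_deriv (by norm_num; ring)
    exact (h1.sub h2).sub h3
  have hanti : AntitoneOn φ (Icc 0 1) := by
    apply antitoneOn_of_deriv_nonpos (convex_Icc 0 1)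
    · exact fun t _ => (hφd t).continuousAt.continuousWithinAt
    · intro t _
      exact (hφd t).differentiableAt.differentiableWithinAt
    · intro t ht
      rw [interior_Icc] at ht
      rw [(hφd t).deriv]
      have := hlip t ht.1.le ht.2.le
      linarith
  have h6 := hanti (left_mem_Icc.mpr zero_le_one) (right_mem_Icc.mpr zero_le_one) zero_le_one
  simp only [hφ, one_smul, zero_smul, add_zero, one_mul, one_pow, zero_pow, mul_zero,
    zero_mul, sub_zero, zero_div] at h6
  linarith

private lemma num_step {a b G L R : ℝ} (hb : 0 < b) (hG : 0 ≤ G) (hL : 0 < L) (hR : 0 < R)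
    (h1 : a ≤ G * R) (h2 : b ≤ a - G ^ 2 / (2 * L)) :
    1 / a + 1 / (2 * L * R ^ 2) ≤ 1 / b := by
  have hG2 : 0 ≤ G ^ 2 / (2 * L) := by positivity
  have ha : 0 < a := by linarith
  have hG2' : G ^ 2 ≤ 2 * L * (a - b) := by
    have := (div_le_iff₀ (by positivity : (0:ℝ) < 2 * L)).mp (by linarith : G ^ 2 / (2 * L) ≤ a - b)
    linarith
  have key : a * b ≤ (a - b) * (2 * L * R ^ 2) := by
    have k1 : a * b ≤ a * a := by nlinarith
    have k2 : a * a ≤ (G * R) ^ 2 := by nlinarith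
    have k3 : (G * R) ^ 2 ≤ 2 * L * (a - b) * R ^ 2 := by nlinarith [sq_nonneg R]
    nlinarith
  have hab : 0 < a * b := mul_pos ha hb
  have hLR : 0 < 2 * L * R ^ 2 := by positivity
  have h3 : 1 / (2 * L * R ^ 2) ≤ (a - b) / (a * b) := by
    rw [div_le_div_iff₀ hLR hab]
    linarith
  have h4 : 1 / b - 1 / a = (a - b) / (a * b) := by
    field_simp
  linarith

private lemma c_eq (L₁ L₂ R : ℝ) (h1 : L₁ ≠ 0) (h2 : L₂ ≠ 0) (hR : R ≠ 0) :
    1/(2*L₁*R^2) + 1/(2*L₂*R^2) = (1/L₁ + 1/L₂) / (2*R^2) := by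
  field_simp
private lemma final_eq1 (S R Δ k' : ℝ) (hS : 0 < S) (hR : 0 < R) (hΔ : 0 < Δ) (hk' : 0 ≤ k') :
    2 * S⁻¹ * R^2 / (k' + 2*R^2*S⁻¹*Δ⁻¹) = 1 / (1/Δ + k' * (S / (2*R^2))) := by
  have hS' := inv_pos.mpr hS
  have hΔ' := inv_pos.mpr hΔ
  have hd1 : 0 < k' + 2*R^2*S⁻¹*Δ⁻¹ := by nlinarith [sq_nonneg R, mul_pos hS' hΔ', pow_pos hR 2]
  have hd2 : 0 < 1/Δ + k' * (S / (2*R^2)) := by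
    have : 0 ≤ k' * (S / (2*R^2)) := mul_nonneg hk' (by positivity)
    have : 0 < 1/Δ := by positivity
    linarith
  rw [div_eq_div_iff hd1.ne' hd2.ne']
  field_simp
  ring
private lemma final_eq2 (S R k' : ℝ) (hS : 0 < S) (hR : 0 < R) (hk' : 0 < k') :
    2 * S⁻¹ * R^2 / k' = 1 / (k' * (S / (2*R^2))) := by
  have hd2 : 0 < k' * (S / (2*R^2)) := mul_pos hk' (by positivity)
  rw [div_eq_div_iff hk'.ne' hd2.ne']
  field_simp

set_option maxHeartbeats 2000000 in
theorem stmt14 {n m : ℕ}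
    (f : EuclideanSpace ℝ (Fin n) × EuclideanSpace ℝ (Fin m) → ℝ)
    (hfconv : ConvexOn ℝ Set.univ f)
    (hfdiff : ContDiff ℝ 1 f)
    -- block Lipschitz continuity of the partial gradients
    (L₁ L₂ : ℝ) (hL₁pos : 0 < L₁) (hL₂pos : 0 < L₂)
    (hlip₁ : ∀ (z : EuclideanSpace ℝ (Fin n) × EuclideanSpace ℝ (Fin m))
        (h₁ : EuclideanSpace ℝ (Fin n)),
      ‖(fderiv ℝ f (z.1 + h₁, z.2)).comp
          (ContinuousLinearMap.inl ℝ (EuclideanSpace ℝ (Fin n)) (EuclideanSpace ℝ (Fin m))) -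
        (fderiv ℝ f z).comp
          (ContinuousLinearMap.inl ℝ (EuclideanSpace ℝ (Fin n)) (EuclideanSpace ℝ (Fin m)))‖
        ≤ L₁ * ‖h₁‖)
    (hlip₂ : ∀ (z : EuclideanSpace ℝ (Fin n) × EuclideanSpace ℝ (Fin m))
        (h₂ : EuclideanSpace ℝ (Fin m)),
      ‖(fderiv ℝ f (z.1, z.2 + h₂)).comp
          (ContinuousLinearMap.inr ℝ (EuclideanSpace ℝ (Fin n)) (EuclideanSpace ℝ (Fin m))) -
        (fderiv ℝ f z).comp
          (ContinuousLinearMap.inr ℝ (EuclideanSpace ℝ (Fin n)) (EuclideanSpace ℝ (Fin m)))‖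
        ≤ L₂ * ‖h₂‖)
    -- nonempty set of minimizers, with minimal value H*
    (Hstar : ℝ) (hHstarle : ∀ z, Hstar ≤ f z) (hHstarex : ∃ z, f z = Hstar)
    -- the alternating minimization sequence
    (x : ℕ → EuclideanSpace ℝ (Fin n) × EuclideanSpace ℝ (Fin m))
    (hinit : ∀ y₂, f (x 0) ≤ f ((x 0).1, y₂))
    (hstep1 : ∀ (k : ℕ) y₁, f ((x (k + 1)).1, (x k).2) ≤ f (y₁, (x k).2))
    (hstep2 : ∀ (k : ℕ) y₂, f (x (k + 1)) ≤ f ((x (k + 1)).1, y₂))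
    (hH0 : Hstar < f (x 0))
    -- compactness of the level set of H at x⁰ and its (Euclidean) diameter R relative
    -- to the set of minimizers
    (hcomp : IsCompact {z : EuclideanSpace ℝ (Fin n) × EuclideanSpace ℝ (Fin m) |
      f z ≤ f (x 0)})
    (R : ℝ) (hRpos : 0 < R)
    (hR : ∀ z, f z ≤ f (x 0) → ∀ y, f y = Hstar →
      ‖z.1 - y.1‖ ^ 2 + ‖z.2 - y.2‖ ^ 2 ≤ R ^ 2) :
    (∀ k : ℕ,
      f (x k) - Hstar ≤
        2 * ((1 / L₁) + (1 / L₂))⁻¹ * R ^ 2 /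
          ((k : ℝ) + 2 * R ^ 2 * ((1 / L₁) + (1 / L₂))⁻¹ * (f (x 0) - Hstar)⁻¹)) ∧
    (∀ k : ℕ, 1 ≤ k →
      f (x k) - Hstar ≤ 2 * ((1 / L₁) + (1 / L₂))⁻¹ * R ^ 2 / (k : ℝ)) := by
  classical
  have hdf : Differentiable ℝ f := hfdiff.differentiable one_ne_zero
  set ι₁ := ContinuousLinearMap.inl ℝ (EuclideanSpace ℝ (Fin n)) (EuclideanSpace ℝ (Fin m)) with hι₁
  set ι₂ := ContinuousLinearMap.inr ℝ (EuclideanSpace ℝ (Fin n)) (EuclideanSpace ℝ (Fin m)) with hι₂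
  -- decomposition of the derivative
  have hdec : ∀ (w : (EuclideanSpace ℝ (Fin n)) × (EuclideanSpace ℝ (Fin m))) (h₁ : (EuclideanSpace ℝ (Fin n))) (h₂ : (EuclideanSpace ℝ (Fin m))),
      fderiv ℝ f w (h₁, h₂) = (fderiv ℝ f w).comp ι₁ h₁ + (fderiv ℝ f w).comp ι₂ h₂ := by
    intro w h₁ h₂
    rw [ContinuousLinearMap.comp_apply, ContinuousLinearMap.comp_apply, hι₁, hι₂,
      ContinuousLinearMap.inl_apply, ContinuousLinearMap.inr_apply, ← map_add]
    congr 1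
    simp
  -- partial minimization forces the partial derivative to vanish
  have hmin1 : ∀ w : (EuclideanSpace ℝ (Fin n)) × (EuclideanSpace ℝ (Fin m)), (∀ y₁, f w ≤ f (y₁, w.2)) → (fderiv ℝ f w).comp ι₁ = 0 := by
    intro w hw
    have heq : ι₁ = (ContinuousLinearMap.id ℝ (EuclideanSpace ℝ (Fin n))).prod (0 : (EuclideanSpace ℝ (Fin n)) →L[ℝ] (EuclideanSpace ℝ (Fin m))) := by
      ext v <;> simp [hι₁]
    have hmap : HasFDerivAt (fun u : (EuclideanSpace ℝ (Fin n)) => ((u : (EuclideanSpace ℝ (Fin n))), w.2)) ι₁ w.1 := by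
      rw [heq]
      exact (hasFDerivAt_id w.1).prodMk (hasFDerivAt_const w.2 w.1)
    have hg : HasFDerivAt (fun u : (EuclideanSpace ℝ (Fin n)) => f (u, w.2)) ((fderiv ℝ f w).comp ι₁) w.1 :=
      (hdf w).hasFDerivAt.comp w.1 hmap
    have hloc : IsLocalMin (fun u : (EuclideanSpace ℝ (Fin n)) => f (u, w.2)) w.1 :=
      Filter.Eventually.of_forall (fun u => hw u)
    exact hloc.hasFDerivAt_eq_zero hg
  have hmin2 : ∀ w : (EuclideanSpace ℝ (Fin n)) × (EuclideanSpace ℝ (Fin m)), (∀ y₂, f w ≤ f (w.1, y₂)) → (fderiv ℝ f w).comp ι₂ = 0 := by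
    intro w hw
    have heq : ι₂ = (0 : (EuclideanSpace ℝ (Fin m)) →L[ℝ] (EuclideanSpace ℝ (Fin n))).prod (ContinuousLinearMap.id ℝ (EuclideanSpace ℝ (Fin m))) := by
      ext v <;> simp [hι₂]
    have hmap : HasFDerivAt (fun v : (EuclideanSpace ℝ (Fin m)) => ((w.1 : (EuclideanSpace ℝ (Fin n))), v)) ι₂ w.2 := by
      rw [heq]
      exact (hasFDerivAt_const w.1 w.2).prodMk (hasFDerivAt_id w.2)
    have hg : HasFDerivAt (fun v : (EuclideanSpace ℝ (Fin m)) => f (w.1, v)) ((fderiv ℝ f w).comp ι₂) w.2 :=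
      (hdf w).hasFDerivAt.comp w.2 hmap
    have hloc : IsLocalMin (fun v : (EuclideanSpace ℝ (Fin m)) => f (w.1, v)) w.2 :=
      Filter.Eventually.of_forall (fun v => hw v)
    exact hloc.hasFDerivAt_eq_zero hg
  -- gap bounded by norm of nonvanishing partial derivative times R
  have hB1 : ∀ w : (EuclideanSpace ℝ (Fin n)) × (EuclideanSpace ℝ (Fin m)), f w ≤ f (x 0) → (fderiv ℝ f w).comp ι₂ = 0 →
      f w - Hstar ≤ ‖(fderiv ℝ f w).comp ι₁‖ * R := by
    intro w hw h0
    obtain ⟨xs, hxs⟩ := hHstarex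
    have hgi := grad_ineq hfconv hdf w xs
    have hxsw : xs - w = (xs.1 - w.1, xs.2 - w.2) := rfl
    rw [hxsw, hdec w (xs.1 - w.1) (xs.2 - w.2), h0] at hgi
    simp only [ContinuousLinearMap.zero_apply, add_zero] at hgi
    have hcs : -(((fderiv ℝ f w).comp ι₁) (xs.1 - w.1)) ≤
        ‖(fderiv ℝ f w).comp ι₁‖ * ‖xs.1 - w.1‖ := by
      have := ContinuousLinearMap.le_opNorm ((fderiv ℝ f w).comp ι₁) (xs.1 - w.1)
      have h2 : -(((fderiv ℝ f w).comp ι₁) (xs.1 - w.1)) ≤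
          ‖((fderiv ℝ f w).comp ι₁) (xs.1 - w.1)‖ := neg_le_abs _
      linarith
    have hr : ‖xs.1 - w.1‖ ≤ R := by
      have h3 := hR w hw xs hxs
      have h4 : ‖xs.1 - w.1‖ = ‖w.1 - xs.1‖ := norm_sub_rev _ _
      nlinarith [norm_nonneg (w.1 - xs.1), norm_nonneg (w.2 - xs.2), norm_nonneg (xs.1 - w.1)]
    have h5 : ‖(fderiv ℝ f w).comp ι₁‖ * ‖xs.1 - w.1‖ ≤ ‖(fderiv ℝ f w).comp ι₁‖ * R :=
      mul_le_mul_of_nonneg_left hr (norm_nonneg _)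
    rw [hxs] at hgi
    linarith
  have hB2 : ∀ w : (EuclideanSpace ℝ (Fin n)) × (EuclideanSpace ℝ (Fin m)), f w ≤ f (x 0) → (fderiv ℝ f w).comp ι₁ = 0 →
      f w - Hstar ≤ ‖(fderiv ℝ f w).comp ι₂‖ * R := by
    intro w hw h0
    obtain ⟨xs, hxs⟩ := hHstarex
    have hgi := grad_ineq hfconv hdf w xs
    have hxsw : xs - w = (xs.1 - w.1, xs.2 - w.2) := rfl
    rw [hxsw, hdec w (xs.1 - w.1) (xs.2 - w.2), h0] at hgi
    simp only [ContinuousLinearMap.zero_apply, zero_add] at hgi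
    have hcs : -(((fderiv ℝ f w).comp ι₂) (xs.2 - w.2)) ≤
        ‖(fderiv ℝ f w).comp ι₂‖ * ‖xs.2 - w.2‖ := by
      have := ContinuousLinearMap.le_opNorm ((fderiv ℝ f w).comp ι₂) (xs.2 - w.2)
      have h2 : -(((fderiv ℝ f w).comp ι₂) (xs.2 - w.2)) ≤
          ‖((fderiv ℝ f w).comp ι₂) (xs.2 - w.2)‖ := neg_le_abs _
      linarith
    have hr : ‖xs.2 - w.2‖ ≤ R := by
      have h3 := hR w hw xs hxs
      have h4 : ‖xs.2 - w.2‖ = ‖w.2 - xs.2‖ := norm_sub_rev _ _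
      nlinarith [norm_nonneg (w.1 - xs.1), norm_nonneg (w.2 - xs.2), norm_nonneg (xs.2 - w.2)]
    have h5 : ‖(fderiv ℝ f w).comp ι₂‖ * ‖xs.2 - w.2‖ ≤ ‖(fderiv ℝ f w).comp ι₂‖ * R :=
      mul_le_mul_of_nonneg_left hr (norm_nonneg _)
    rw [hxs] at hgi
    linarith
  -- descent along block 1
  have hdesc1 : ∀ w : (EuclideanSpace ℝ (Fin n)) × (EuclideanSpace ℝ (Fin m)), ∃ u₁ : (EuclideanSpace ℝ (Fin n)),
      f (u₁, w.2) ≤ f w - ‖(fderiv ℝ f w).comp ι₁‖ ^ 2 / (2 * L₁) := by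
    intro w
    set D := (fderiv ℝ f w).comp ι₁ with hD
    set v : (EuclideanSpace ℝ (Fin n)) := (InnerProductSpace.toDual ℝ (EuclideanSpace ℝ (Fin n))).symm D with hv
    set h₁ : (EuclideanSpace ℝ (Fin n)) := (-L₁⁻¹) • v with hh₁
    refine ⟨w.1 + h₁, ?_⟩
    have hvnorm : ‖v‖ = ‖D‖ := LinearIsometryEquiv.norm_map _ D
    have hh₁norm : ‖h₁‖ = L₁⁻¹ * ‖D‖ := by
      rw [hh₁, norm_smul, Real.norm_eq_abs, abs_neg, abs_of_pos (inv_pos.mpr hL₁pos), hvnorm]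
    have hq := quad_bound hdf w ((h₁ : (EuclideanSpace ℝ (Fin n))), (0 : (EuclideanSpace ℝ (Fin m)))) (L₁ * ‖h₁‖ ^ 2) ?_
    · have hpt1 : w + ((h₁ : (EuclideanSpace ℝ (Fin n))), (0 : (EuclideanSpace ℝ (Fin m)))) = (w.1 + h₁, w.2) := by
        rw [Prod.ext_iff]; constructor <;> simp
      rw [hpt1, hdec w h₁ 0] at hq
      simp only [map_zero, add_zero] at hq
      have hDh : D h₁ = -(L₁⁻¹ * ‖D‖ ^ 2) := by
        have h7 : D h₁ = inner ℝ v h₁ := (InnerProductSpace.toDual_symm_apply).symm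
        rw [h7, hh₁, real_inner_smul_right, real_inner_self_eq_norm_sq, hvnorm]
        ring
      rw [hDh] at hq
      have harith : f w + -(L₁⁻¹ * ‖D‖ ^ 2) + L₁ * ‖h₁‖ ^ 2 / 2 =
          f w - ‖D‖ ^ 2 / (2 * L₁) := by
        rw [hh₁norm]
        field_simp
        ring
      linarith [hq, harith.le, harith.ge]
    · intro t ht0 ht1
      have hpt : w + t • ((h₁ : (EuclideanSpace ℝ (Fin n))), (0 : (EuclideanSpace ℝ (Fin m)))) = (w.1 + t • h₁, w.2) := by
        rw [Prod.ext_iff]; constructor <;> simp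
      rw [hpt, hdec (w.1 + t • h₁, w.2) h₁ 0, hdec w h₁ 0]
      simp only [map_zero, add_zero]
      have h8 : ((fderiv ℝ f (w.1 + t • h₁, w.2)).comp ι₁) h₁ - ((fderiv ℝ f w).comp ι₁) h₁ =
          ((fderiv ℝ f (w.1 + t • h₁, w.2)).comp ι₁ - (fderiv ℝ f w).comp ι₁) h₁ := by simp
      rw [h8]
      have h9 := ContinuousLinearMap.le_opNorm
        ((fderiv ℝ f (w.1 + t • h₁, w.2)).comp ι₁ - (fderiv ℝ f w).comp ι₁) h₁
      have h10 := hlip₁ w (t • h₁)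
      have h11 : ‖t • h₁‖ = t * ‖h₁‖ := by
        rw [norm_smul, Real.norm_eq_abs, abs_of_nonneg ht0]
      have h12 : ((fderiv ℝ f (w.1 + t • h₁, w.2)).comp ι₁ - (fderiv ℝ f w).comp ι₁) h₁ ≤
          ‖(fderiv ℝ f (w.1 + t • h₁, w.2)).comp ι₁ - (fderiv ℝ f w).comp ι₁‖ * ‖h₁‖ :=
        le_trans (le_abs_self _) h9
      have h13 : ‖(fderiv ℝ f (w.1 + t • h₁, w.2)).comp ι₁ - (fderiv ℝ f w).comp ι₁‖ * ‖h₁‖ ≤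
          L₁ * (t * ‖h₁‖) * ‖h₁‖ := by
        apply mul_le_mul_of_nonneg_right _ (norm_nonneg _)
        rw [← h11]
        exact h10
      nlinarith [norm_nonneg h₁]
  -- descent along block 2
  have hdesc2 : ∀ w : (EuclideanSpace ℝ (Fin n)) × (EuclideanSpace ℝ (Fin m)), ∃ u₂ : (EuclideanSpace ℝ (Fin m)),
      f (w.1, u₂) ≤ f w - ‖(fderiv ℝ f w).comp ι₂‖ ^ 2 / (2 * L₂) := by
    intro w
    set D := (fderiv ℝ f w).comp ι₂ with hD
    set v : (EuclideanSpace ℝ (Fin m)) := (InnerProductSpace.toDual ℝ (EuclideanSpace ℝ (Fin m))).symm D with hv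
    set h₂ : (EuclideanSpace ℝ (Fin m)) := (-L₂⁻¹) • v with hh₂
    refine ⟨w.2 + h₂, ?_⟩
    have hvnorm : ‖v‖ = ‖D‖ := LinearIsometryEquiv.norm_map _ D
    have hh₂norm : ‖h₂‖ = L₂⁻¹ * ‖D‖ := by
      rw [hh₂, norm_smul, Real.norm_eq_abs, abs_neg, abs_of_pos (inv_pos.mpr hL₂pos), hvnorm]
    have hq := quad_bound hdf w ((0 : (EuclideanSpace ℝ (Fin n))), (h₂ : (EuclideanSpace ℝ (Fin m)))) (L₂ * ‖h₂‖ ^ 2) ?_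
    · have hpt1 : w + ((0 : (EuclideanSpace ℝ (Fin n))), (h₂ : (EuclideanSpace ℝ (Fin m)))) = (w.1, w.2 + h₂) := by
        rw [Prod.ext_iff]; constructor <;> simp
      rw [hpt1, hdec w 0 h₂] at hq
      simp only [map_zero, zero_add] at hq
      have hDh : D h₂ = -(L₂⁻¹ * ‖D‖ ^ 2) := by
        have h7 : D h₂ = inner ℝ v h₂ := (InnerProductSpace.toDual_symm_apply).symm
        rw [h7, hh₂, real_inner_smul_right, real_inner_self_eq_norm_sq, hvnorm]
        ring
      rw [hDh] at hq
      have harith : f w + -(L₂⁻¹ * ‖D‖ ^ 2) + L₂ * ‖h₂‖ ^ 2 / 2 =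
          f w - ‖D‖ ^ 2 / (2 * L₂) := by
        rw [hh₂norm]
        field_simp
        ring
      linarith [hq, harith.le, harith.ge]
    · intro t ht0 ht1
      have hpt : w + t • ((0 : (EuclideanSpace ℝ (Fin n))), (h₂ : (EuclideanSpace ℝ (Fin m)))) = (w.1, w.2 + t • h₂) := by
        rw [Prod.ext_iff]; constructor <;> simp
      rw [hpt, hdec (w.1, w.2 + t • h₂) 0 h₂, hdec w 0 h₂]
      simp only [map_zero, zero_add]
      have h8 : ((fderiv ℝ f (w.1, w.2 + t • h₂)).comp ι₂) h₂ - ((fderiv ℝ f w).comp ι₂) h₂ =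
          ((fderiv ℝ f (w.1, w.2 + t • h₂)).comp ι₂ - (fderiv ℝ f w).comp ι₂) h₂ := by simp
      rw [h8]
      have h9 := ContinuousLinearMap.le_opNorm
        ((fderiv ℝ f (w.1, w.2 + t • h₂)).comp ι₂ - (fderiv ℝ f w).comp ι₂) h₂
      have h10 := hlip₂ w (t • h₂)
      have h11 : ‖t • h₂‖ = t * ‖h₂‖ := by
        rw [norm_smul, Real.norm_eq_abs, abs_of_nonneg ht0]
      have h12 : ((fderiv ℝ f (w.1, w.2 + t • h₂)).comp ι₂ - (fderiv ℝ f w).comp ι₂) h₂ ≤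
          ‖(fderiv ℝ f (w.1, w.2 + t • h₂)).comp ι₂ - (fderiv ℝ f w).comp ι₂‖ * ‖h₂‖ :=
        le_trans (le_abs_self _) h9
      have h13 : ‖(fderiv ℝ f (w.1, w.2 + t • h₂)).comp ι₂ - (fderiv ℝ f w).comp ι₂‖ * ‖h₂‖ ≤
          L₂ * (t * ‖h₂‖) * ‖h₂‖ := by
        apply mul_le_mul_of_nonneg_right _ (norm_nonneg _)
        rw [← h11]
        exact h10
      nlinarith [norm_nonneg h₂]
  -- the intermediate (half-step) iterates
  set y : ℕ → (EuclideanSpace ℝ (Fin n)) × (EuclideanSpace ℝ (Fin m)) := fun k => ((x (k + 1)).1, (x k).2) with hy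
  have hy_le : ∀ k, f (y k) ≤ f (x k) := fun k => hstep1 k (x k).1
  have hx_le : ∀ k, f (x (k + 1)) ≤ f (y k) := fun k => hstep2 k (x k).2
  have hlev : ∀ k, f (x k) ≤ f (x 0) := by
    intro k
    induction k with
    | zero => exact le_rfl
    | succ j ih => exact le_trans (le_trans (hx_le j) (hy_le j)) ih
  have hzero2 : ∀ k, (fderiv ℝ f (x k)).comp ι₂ = 0 := by
    intro k
    apply hmin2
    cases k with
    | zero => exact hinit
    | succ j => exact hstep2 j
  have hzero1 : ∀ k, (fderiv ℝ f (y k)).comp ι₁ = 0 := fun k =>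
    hmin1 (y k) (fun y₁ => hstep1 k y₁)
  have hdown1 : ∀ k, f (y k) ≤ f (x k) - ‖(fderiv ℝ f (x k)).comp ι₁‖ ^ 2 / (2 * L₁) := by
    intro k
    obtain ⟨u₁, hu⟩ := hdesc1 (x k)
    exact le_trans (hstep1 k u₁) hu
  have hdown2 : ∀ k, f (x (k + 1)) ≤ f (y k) - ‖(fderiv ℝ f (y k)).comp ι₂‖ ^ 2 / (2 * L₂) := by
    intro k
    obtain ⟨u₂, hu⟩ := hdesc2 (y k)
    exact le_trans (hstep2 k u₂) hu
  set c : ℝ := 1 / (2 * L₁ * R ^ 2) + 1 / (2 * L₂ * R ^ 2) with hc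
  have hcpos : 0 < c := by rw [hc]; positivity
  have hkey : ∀ k, 0 < f (x (k + 1)) - Hstar →
      1 / (f (x k) - Hstar) + c ≤ 1 / (f (x (k + 1)) - Hstar) := by
    intro k hd
    have hb : 0 < f (y k) - Hstar := by linarith [hx_le k]
    have hylev : f (y k) ≤ f (x 0) := le_trans (hy_le k) (hlev k)
    have s1 := num_step hb (norm_nonneg ((fderiv ℝ f (x k)).comp ι₁)) hL₁pos hRpos
      (hB1 (x k) (hlev k) (hzero2 k)) (by linarith [hdown1 k])
    have s2 := num_step hd (norm_nonneg ((fderiv ℝ f (y k)).comp ι₂)) hL₂pos hRpos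
      (hB2 (y k) hylev (hzero1 (k))) (by linarith [hdown2 k])
    rw [hc]
    linarith
  have hΔ₀ : 0 < f (x 0) - Hstar := by linarith
  have hinv : ∀ k, f (x k) - Hstar = 0 ∨
      (0 < f (x k) - Hstar ∧
        1 / (f (x 0) - Hstar) + (k : ℝ) * c ≤ 1 / (f (x k) - Hstar)) := by
    intro k
    induction k with
    | zero => right; exact ⟨hΔ₀, by simp⟩
    | succ j ih =>
      have h0 : 0 ≤ f (x (j + 1)) - Hstar := by linarith [hHstarle (x (j + 1))]
      rcases h0.lt_or_eq with hpos | heq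
      · right
        refine ⟨hpos, ?_⟩
        rcases ih with h | ⟨hj, hjle⟩
        · exfalso
          have := hy_le j
          have := hx_le j
          linarith
        · have hk := hkey j hpos
          push_cast
          linarith
      · left; exact heq.symm
  constructor
  · intro k
    have hSi : 0 < ((1 / L₁) + (1 / L₂))⁻¹ := by positivity
    have hden : 0 < (k : ℝ) + 2 * R ^ 2 * ((1 / L₁) + (1 / L₂))⁻¹ * (f (x 0) - Hstar)⁻¹ := by
      have h1 : 0 < 2 * R ^ 2 * ((1 / L₁) + (1 / L₂))⁻¹ * (f (x 0) - Hstar)⁻¹ :=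
        mul_pos (mul_pos (by positivity) hSi) (inv_pos.mpr hΔ₀)
      have h2 : (0:ℝ) ≤ (k : ℝ) := Nat.cast_nonneg k
      linarith
    rcases hinv k with h | ⟨hk, hkle⟩
    · rw [h]
      apply div_nonneg _ hden.le
      positivity
    · have hq : 0 < 1 / (f (x 0) - Hstar) + (k : ℝ) * c := by
        have h1 : 0 < 1 / (f (x 0) - Hstar) := by positivity
        have h2 : 0 ≤ (k : ℝ) * c := mul_nonneg (Nat.cast_nonneg k) hcpos.le
        exact add_pos_of_pos_of_nonneg h1 h2
      have hle := one_div_le_one_div_of_le hq hkle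
      rw [one_div_one_div] at hle
      have hS : 0 < (1 / L₁) + (1 / L₂) := by positivity
      have hc2 : c = ((1 / L₁) + (1 / L₂)) / (2 * R ^ 2) := by
        rw [hc]; exact c_eq L₁ L₂ R hL₁pos.ne' hL₂pos.ne' hRpos.ne'
      have heqR : 2 * ((1 / L₁) + (1 / L₂))⁻¹ * R ^ 2 /
          ((k : ℝ) + 2 * R ^ 2 * ((1 / L₁) + (1 / L₂))⁻¹ * (f (x 0) - Hstar)⁻¹) =
          1 / (1 / (f (x 0) - Hstar) + (k : ℝ) * c) := by
        rw [hc2]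
        exact final_eq1 _ R _ (k : ℝ) hS hRpos hΔ₀ (Nat.cast_nonneg k)
      rw [heqR]
      exact hle
  · intro k hk1
    have hkpos : (0:ℝ) < (k : ℝ) := by exact_mod_cast Nat.pos_of_ne_zero (by omega)
    rcases hinv k with h | ⟨hk, hkle⟩
    · rw [h]
      apply div_nonneg _ hkpos.le
      have hSi : 0 < ((1 / L₁) + (1 / L₂))⁻¹ := by positivity
      positivity
    · have hkc : 0 < (k : ℝ) * c := mul_pos hkpos hcpos
      have h1 : 0 < 1 / (f (x 0) - Hstar) := by positivity
      have hle := one_div_le_one_div_of_le hkc (le_trans (by linarith) hkle)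
      rw [one_div_one_div] at hle
      have hS : 0 < (1 / L₁) + (1 / L₂) := by positivity
      have hc2 : c = ((1 / L₁) + (1 / L₂)) / (2 * R ^ 2) := by
        rw [hc]; exact c_eq L₁ L₂ R hL₁pos.ne' hL₂pos.ne' hRpos.ne'
      have heq2 : 2 * ((1 / L₁) + (1 / L₂))⁻¹ * R ^ 2 / (k : ℝ) = 1 / ((k : ℝ) * c) := by
        rw [hc2]
        exact final_eq2 _ R (k : ℝ) hS hRpos hkpos
      rw [heq2]
      exact hle
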